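/- Let F : ℝ → ℂ be twice continuously differentiable with F′(0) = 0 and sup_{s ≥ 0} (|F(s)| + |F′(s)| + |F″(s)|) < ∞. Let g : ℝ → ℂ be measurable with ∫_ℝ (1+|y|)²|g(y)| dy < ∞ and ∫_ℝ g(y) dy = ∫_ℝ y·g(y) dy = 0. Then for every λ > 0 and every x ∈ ℝ, both integrals converge absolutely and ∫_ℝ F(λ|x−y|) g(y) dy = λ²·∫_ℝ ∫₀¹ (1−θ)·F″(λ|x−θy|)·y²·g(y) dθ dy. -/

import Mathlib

open MeasureTheory

lemma sgn_mul_abs (t : ℝ) : Real.sign t * |t| = t := by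
  rcases lt_trichotomy t 0 with h | h | h
  · rw [Real.sign_of_neg h, abs_of_neg h]; ring
  · simp [h]
  · rw [Real.sign_of_pos h, abs_of_pos h]; ring

lemma absDeriv1 {F : ℝ → ℂ} (hFd : Differentiable ℝ F) (hF'0 : deriv F 0 = 0)
    {l : ℝ} (hl : 0 < l) (t : ℝ) :
    HasDerivAt (fun s => F (l * |s|)) ((Real.sign t * l : ℝ) • deriv F (l * |t|)) t := by
  rcases lt_trichotomy t 0 with h | h | h
  · have key : HasDerivAt (fun s => F (l * (-s))) ((-l : ℝ) • deriv F (l * (-t))) t := by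
      have h1 : HasDerivAt (fun s : ℝ => l * (-s)) (-l) t := by
        simpa using ((hasDerivAt_id t).neg.const_mul l)
      exact (hFd (l * (-t))).hasDerivAt.scomp t h1
    have : HasDerivAt (fun s => F (l * |s|)) ((-l : ℝ) • deriv F (l * (-t))) t := by
      apply key.congr_of_eventuallyEq
      filter_upwards [eventually_lt_nhds h] with s hs
      rw [abs_of_neg hs]
    simpa [abs_of_neg h, Real.sign_of_neg h] using this
  · subst h
    rw [Real.sign_zero, zero_mul, zero_smul]
    rw [hasDerivAt_iff_isLittleO]
    have h0 : HasDerivAt F 0 0 := by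
      simpa [hF'0] using (hFd 0).hasDerivAt
    rw [hasDerivAt_iff_isLittleO] at h0
    simp only [smul_zero, sub_zero, mul_zero, abs_zero] at h0 ⊢
    have hcomp := h0.comp_tendsto (k := fun s : ℝ => l * |s|) (by
      have : Continuous (fun s : ℝ => l * |s|) := by continuity
      simpa using this.tendsto 0)
    refine hcomp.trans_isBigO ?_
    apply Asymptotics.isBigO_of_le' (c := l)
    intro s
    simp [abs_mul, abs_of_pos hl, mul_comm]
  · have key : HasDerivAt (fun s => F (l * s)) ((l : ℝ) • deriv F (l * t)) t := by
      have h1 : HasDerivAt (fun s : ℝ => l * s) l t := by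
        simpa using ((hasDerivAt_id t).const_mul l)
      exact (hFd (l * t)).hasDerivAt.scomp t h1
    have : HasDerivAt (fun s => F (l * |s|)) ((l : ℝ) • deriv F (l * t)) t := by
      apply key.congr_of_eventuallyEq
      filter_upwards [eventually_gt_nhds h] with s hs
      rw [abs_of_pos hs]
    simpa [abs_of_pos h, Real.sign_of_pos h] using this

lemma absDeriv2 {F : ℝ → ℂ} (hF'd : Differentiable ℝ (deriv F)) (hF'0 : deriv F 0 = 0)
    {l : ℝ} (hl : 0 < l) (t : ℝ) :
    HasDerivAt (fun s => (Real.sign s * l : ℝ) • deriv F (l * |s|))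
      ((l ^ 2 : ℝ) • deriv (deriv F) (l * |t|)) t := by
  rcases lt_trichotomy t 0 with h | h | h
  · have key : HasDerivAt (fun s => (-l : ℝ) • deriv F (l * (-s)))
        ((-l : ℝ) • ((-l : ℝ) • deriv (deriv F) (l * (-t)))) t := by
      have h1 : HasDerivAt (fun s : ℝ => l * (-s)) (-l) t := by
        simpa using ((hasDerivAt_id t).neg.const_mul l)
      exact ((hF'd (l * (-t))).hasDerivAt.scomp t h1).const_smul (-l : ℝ)
    have heq : HasDerivAt (fun s => (Real.sign s * l : ℝ) • deriv F (l * |s|))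
        ((-l : ℝ) • ((-l : ℝ) • deriv (deriv F) (l * (-t)))) t := by
      apply key.congr_of_eventuallyEq
      filter_upwards [eventually_lt_nhds h] with s hs
      rw [abs_of_neg hs, Real.sign_of_neg hs]; norm_num
    have : ((-l : ℝ) • ((-l : ℝ) • deriv (deriv F) (l * (-t)))) =
        (l ^ 2 : ℝ) • deriv (deriv F) (l * |t|) := by
      rw [abs_of_neg h, smul_smul]; ring_nf
    rwa [this] at heq
  · subst h
    rw [hasDerivAt_iff_isLittleO]
    have h0 : HasDerivAt (deriv F) (deriv (deriv F) 0) 0 := (hF'd 0).hasDerivAt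
    rw [hasDerivAt_iff_isLittleO] at h0
    simp only [sub_zero, hF'0, sub_zero] at h0 ⊢
    have hcomp : (fun s : ℝ => deriv F (l * |s|) - (l * |s|) • deriv (deriv F) 0)
        =o[nhds 0] (fun s : ℝ => s) := by
      have := h0.comp_tendsto (k := fun s : ℝ => l * |s|) (by
        have : Continuous (fun s : ℝ => l * |s|) := by continuity
        simpa using this.tendsto 0)
      refine this.trans_isBigO ?_
      apply Asymptotics.isBigO_of_le' (c := l)
      intro s
      simp [abs_mul, abs_of_pos hl, mul_comm]
    have hbig : (fun s : ℝ => (Real.sign s * l : ℝ)) =O[nhds 0] (fun _ : ℝ => (1:ℝ)) := by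
      apply Asymptotics.isBigO_of_le' (c := l)
      intro s
      rcases lt_trichotomy s 0 with hs | hs | hs <;>
        simp [Real.sign_of_neg, Real.sign_of_pos, hs, abs_of_pos hl, le_abs_self, hl.le]
    have hsmul := hbig.smul_isLittleO hcomp
    simp only [one_smul] at hsmul
    refine hsmul.congr' ?_ (by filter_upwards with s; simp)
    filter_upwards with s
    have h1 : Real.sign s * l * (l * |s|) = s * l ^ 2 := by
      rw [show Real.sign s * l * (l * |s|) = (Real.sign s * |s|) * l ^ 2 by ring, sgn_mul_abs]
    rw [smul_sub, smul_smul, h1, Real.sign_zero, zero_mul, zero_smul, sub_zero, smul_smul,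
      mul_comm (s : ℝ) (l^2 : ℝ)]
    norm_num
  · have key : HasDerivAt (fun s => (l : ℝ) • deriv F (l * s))
        ((l : ℝ) • ((l : ℝ) • deriv (deriv F) (l * t))) t := by
      have h1 : HasDerivAt (fun s : ℝ => l * s) l t := by
        simpa using ((hasDerivAt_id t).const_mul l)
      exact ((hF'd (l * t)).hasDerivAt.scomp t h1).const_smul (l : ℝ)
    have heq : HasDerivAt (fun s => (Real.sign s * l : ℝ) • deriv F (l * |s|))
        ((l : ℝ) • ((l : ℝ) • deriv (deriv F) (l * t))) t := by
      apply key.congr_of_eventuallyEq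
      filter_upwards [eventually_gt_nhds h] with s hs
      rw [abs_of_pos hs, Real.sign_of_pos hs]; norm_num
    have : ((l : ℝ) • ((l : ℝ) • deriv (deriv F) (l * t))) =
        (l ^ 2 : ℝ) • deriv (deriv F) (l * |t|) := by
      rw [abs_of_pos h, smul_smul]; ring_nf
    rwa [this] at heq

lemma taylor2 {G G' G'' : ℝ → ℂ} (hG : ∀ t, HasDerivAt G (G' t) t)
    (hG' : ∀ t, HasDerivAt G' (G'' t) t) (hc : Continuous G'') (x y : ℝ) :
    G (x - y) = G x + (-y : ℝ) • G' x
      + ∫ θ in (0:ℝ)..1, ((1 - θ) * y ^ 2 : ℝ) • G'' (x - θ * y) := by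
  set ψ : ℝ → ℂ := fun θ => G (x - θ * y) + ((1 - θ) * (-y) : ℝ) • G' (x - θ * y) with hψdef
  have hψ : ∀ θ ∈ Set.uIcc (0:ℝ) 1,
      HasDerivAt ψ (((1 - θ) * y ^ 2 : ℝ) • G'' (x - θ * y)) θ := by
    intro θ _
    have hin : HasDerivAt (fun θ : ℝ => x - θ * y) (-y) θ := by
      simpa using ((hasDerivAt_id θ).mul_const y).const_sub x
    have h1 : HasDerivAt (fun θ : ℝ => G (x - θ * y)) ((-y : ℝ) • G' (x - θ * y)) θ :=
      (hG _).scomp θ hin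
    have h2 : HasDerivAt (fun θ : ℝ => G' (x - θ * y)) ((-y : ℝ) • G'' (x - θ * y)) θ :=
      (hG' _).scomp θ hin
    have hc1 : HasDerivAt (fun θ : ℝ => ((1 - θ) * (-y) : ℝ)) y θ := by
      have := ((hasDerivAt_id θ).const_sub 1).mul_const (-y)
      simpa using this
    have := h1.add (hc1.smul h2)
    refine this.congr_deriv ?_
    simp only [smul_smul, smul_add, ← add_smul]
    module
  have hint : IntervalIntegrable (fun θ => ((1 - θ) * y ^ 2 : ℝ) • G'' (x - θ * y))
      volume 0 1 := by
    apply Continuous.intervalIntegrable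
    exact (by continuity : Continuous fun θ : ℝ => ((1 - θ) * y ^ 2 : ℝ)).smul
      (hc.comp (by continuity))
  have key := intervalIntegral.integral_eq_sub_of_hasDerivAt hψ hint
  rw [key, hψdef]
  norm_num

/-- Order-two moment cancellation: if `g` has vanishing zeroth and first moments and
`F'(0) = 0`, then `∫ F(λ|x-y|) g(y) dy = λ² ∫∫ (1-θ) F''(λ|x-θy|) y² g(y) dθ dy`,
both integrals being absolutely convergent. -/
theorem stmt6 (F : ℝ → ℂ) (hF : ContDiff ℝ 2 F) (hF'0 : deriv F 0 = 0)
    (hbd : ∃ M : ℝ, ∀ s : ℝ, 0 ≤ s →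
      ‖F s‖ + ‖deriv F s‖ + ‖deriv (deriv F) s‖ ≤ M)
    (g : ℝ → ℂ) (hgm : Measurable g)
    (hgint : Integrable (fun y : ℝ => (1 + |y|) ^ 2 * ‖g y‖))
    (hg0 : ∫ y : ℝ, g y = 0)
    (hg1 : ∫ y : ℝ, (y : ℂ) * g y = 0)
    (l : ℝ) (hl : 0 < l) (x : ℝ) :
    Integrable (fun y : ℝ => F (l * |x - y|) * g y) ∧
    Integrable
      (fun p : ℝ × ℝ =>
        ((1 - p.2 : ℝ) : ℂ) * deriv (deriv F) (l * |x - p.2 * p.1|) * ((p.1 : ℂ) ^ 2 * g p.1))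
      (volume.prod (volume.restrict (Set.Icc 0 1))) ∧
    ∫ y : ℝ, F (l * |x - y|) * g y =
      (l : ℂ) ^ 2 * ∫ y : ℝ, ∫ θ in (0:ℝ)..1,
        ((1 - θ : ℝ) : ℂ) * deriv (deriv F) (l * |x - θ * y|) * ((y : ℂ) ^ 2 * g y) := by
  obtain ⟨M, hM⟩ := hbd
  have hM0 : 0 ≤ M := le_trans (by positivity) (hM 0 le_rfl)
  have hFbd : ∀ s : ℝ, 0 ≤ s → ‖F s‖ ≤ M := fun s hs => by
    have := hM s hs; have := norm_nonneg (deriv F s); have := norm_nonneg (deriv (deriv F) s)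
    linarith
  have hF''bd : ∀ s : ℝ, 0 ≤ s → ‖deriv (deriv F) s‖ ≤ M := fun s hs => by
    have := hM s hs; have := norm_nonneg (F s); have := norm_nonneg (deriv F s)
    linarith
  have h2 : ContDiff ℝ ((1 : ℕ) + 1) F := by exact_mod_cast hF
  have hFd : Differentiable ℝ F := (contDiff_succ_iff_deriv.mp h2).1
  have hF1 : ContDiff ℝ 1 (deriv F) := by
    have := (contDiff_succ_iff_deriv.mp h2).2.2
    exact_mod_cast this
  have hF'd : Differentiable ℝ (deriv F) := (contDiff_one_iff_deriv.mp hF1).1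
  have hF''c : Continuous (deriv (deriv F)) := (contDiff_one_iff_deriv.mp hF1).2
  -- basic integrabilities
  have hgsq : ∀ y : ℝ, (1:ℝ) ≤ (1 + |y|) ^ 2 := fun y => by nlinarith [abs_nonneg y]
  have hg_int : Integrable g := by
    refine hgint.mono' hgm.aestronglyMeasurable ?_
    filter_upwards with y
    have h1 := hgsq y
    have h2 := norm_nonneg (g y)
    nlinarith
  have hyg_int : Integrable (fun y : ℝ => (y : ℂ) * g y) := by
    refine hgint.mono' ((Complex.measurable_ofReal.mul hgm).aestronglyMeasurable) ?_
    filter_upwards with y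
    rw [norm_mul, Complex.norm_real, Real.norm_eq_abs]
    have h2 := norm_nonneg (g y)
    have h3 : |y| ≤ (1 + |y|) ^ 2 := by nlinarith [abs_nonneg y, sq_nonneg (|y|)]
    exact mul_le_mul_of_nonneg_right h3 h2
  -- Part 1
  have part1 : Integrable (fun y : ℝ => F (l * |x - y|) * g y) := by
    refine (hgint.const_mul M).mono' ?_ ?_
    · exact ((hF.continuous.comp (by continuity)).aestronglyMeasurable.mul
        hgm.aestronglyMeasurable)
    · filter_upwards with y
      rw [norm_mul]
      have hb : ‖F (l * |x - y|)‖ ≤ M := hFbd _ (by positivity)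
      have h2 := norm_nonneg (g y)
      calc ‖F (l * |x - y|)‖ * ‖g y‖ ≤ M * ‖g y‖ := mul_le_mul_of_nonneg_right hb h2
        _ ≤ M * ((1 + |y|) ^ 2 * ‖g y‖) := by
            apply mul_le_mul_of_nonneg_left _ hM0
            nlinarith [hgsq y]
  -- Part 2
  set ν := volume.restrict (Set.Icc (0:ℝ) 1) with hν
  haveI : IsFiniteMeasure ν := by
    constructor
    rw [hν, Measure.restrict_apply_univ, Real.volume_Icc]
    exact ENNReal.ofReal_lt_top
  set K : ℝ × ℝ → ℂ := fun p =>
    ((1 - p.2 : ℝ) : ℂ) * deriv (deriv F) (l * |x - p.2 * p.1|) * ((p.1 : ℂ) ^ 2 * g p.1)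
    with hK
  have hKmeas : AEStronglyMeasurable K (volume.prod ν) := by
    apply Measurable.aestronglyMeasurable
    apply Measurable.mul
    · apply Measurable.mul
      · exact (Complex.continuous_ofReal.comp (continuous_const.sub continuous_snd)).measurable
      · exact (hF''c.comp (by continuity)).measurable
    · exact ((Complex.measurable_ofReal.comp measurable_fst).pow_const 2).mul
        (hgm.comp measurable_fst)
  have hae : ∀ᵐ p : ℝ × ℝ ∂(volume.prod ν), p.2 ∈ Set.Icc (0:ℝ) 1 := by
    rw [Measure.ae_prod_iff_ae_ae (measurableSet_Icc.preimage measurable_snd)]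
    exact Filter.Eventually.of_forall fun y => ae_restrict_mem measurableSet_Icc
  have part2 : Integrable K (volume.prod ν) := by
    refine (((hgint.const_mul M).mul_prod (integrable_const (1:ℝ)))).mono' hKmeas ?_
    filter_upwards [hae] with p hp
    obtain ⟨h0, h1⟩ := hp
    rw [hK]
    simp only []
    rw [norm_mul, norm_mul, norm_mul, Complex.norm_real, Real.norm_eq_abs,
      norm_pow, Complex.norm_real, Real.norm_eq_abs]
    have e1 : |1 - p.2| ≤ 1 := by rw [abs_of_nonneg (by linarith)]; linarith
    have e2 : ‖deriv (deriv F) (l * |x - p.2 * p.1|)‖ ≤ M := hF''bd _ (by positivity)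
    have e3 : |p.1| ^ 2 ≤ (1 + |p.1|) ^ 2 := by nlinarith [abs_nonneg p.1]
    have h2 := norm_nonneg (g p.1)
    have h3 := norm_nonneg (deriv (deriv F) (l * |x - p.2 * p.1|))
    have h4 := abs_nonneg (1 - p.2)
    have h5 := abs_nonneg p.1
    have h6 := sq_nonneg (|p.1|)
    have h7 := hgsq p.1
    calc |1 - p.2| * ‖deriv (deriv F) (l * |x - p.2 * p.1|)‖ * (|p.1| ^ 2 * ‖g p.1‖)
        ≤ 1 * M * ((1 + |p.1|) ^ 2 * ‖g p.1‖) := by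
          apply mul_le_mul _ _ (by positivity) (by positivity)
          · exact mul_le_mul e1 e2 h3 (by norm_num)
          · exact mul_le_mul_of_nonneg_right e3 h2
      _ = M * ((1 + |p.1|) ^ 2 * ‖g p.1‖) * 1 := by ring
  -- Taylor expansion
  set G' : ℝ → ℂ := fun t => (Real.sign t * l : ℝ) • deriv F (l * |t|) with hG'def
  have hG : ∀ t, HasDerivAt (fun s => F (l * |s|)) (G' t) t := absDeriv1 hFd hF'0 hl
  have hG' : ∀ t, HasDerivAt G' ((l ^ 2 : ℝ) • deriv (deriv F) (l * |t|)) t :=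
    absDeriv2 hF'd hF'0 hl
  have hG''c : Continuous fun t => (l ^ 2 : ℝ) • deriv (deriv F) (l * |t|) :=
    (hF''c.comp (continuous_const.mul continuous_abs)).const_smul (l ^ 2 : ℝ)
  have htay : ∀ y : ℝ, F (l * |x - y|) = F (l * |x|) + (-y : ℝ) • G' x
      + ∫ θ in (0:ℝ)..1, ((1 - θ) * y ^ 2 : ℝ) • ((l ^ 2 : ℝ) •
          deriv (deriv F) (l * |x - θ * y|)) := fun y =>
    taylor2 hG hG' hG''c x y
  -- the inner integral, as in the statement
  set Jc : ℝ → ℂ := fun y => ∫ θ in (0:ℝ)..1,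
      ((1 - θ : ℝ) : ℂ) * deriv (deriv F) (l * |x - θ * y|) * ((y : ℂ) ^ 2 * g y) with hJc
  have hJeq : ∀ y : ℝ, (∫ θ, K (y, θ) ∂ν) = Jc y := by
    intro y
    rw [hν, hJc]
    have : (∫ θ, K (y, θ) ∂(volume.restrict (Set.Icc (0:ℝ) 1)))
        = ∫ θ in Set.Ioc (0:ℝ) 1, K (y, θ) := by
      rw [← MeasureTheory.integral_Icc_eq_integral_Ioc]
    rw [this, ← intervalIntegral.integral_of_le zero_le_one]
  have hJc_int : Integrable Jc := by
    refine (part2.integral_prod_left).congr ?_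
    filter_upwards with y
    exact hJeq y
  have hRmul : ∀ y : ℝ, (∫ θ in (0:ℝ)..1, ((1 - θ) * y ^ 2 : ℝ) • ((l ^ 2 : ℝ) •
      deriv (deriv F) (l * |x - θ * y|))) * g y = (l : ℂ) ^ 2 * Jc y := by
    intro y
    rw [hJc, ← intervalIntegral.integral_mul_const, ← intervalIntegral.integral_const_mul]
    apply intervalIntegral.integral_congr
    intro θ _
    simp only [Complex.real_smul]
    push_cast
    ring
  have hsplit : ∀ y : ℝ, F (l * |x - y|) * g y =
      F (l * |x|) * g y + (-(G' x)) * ((y : ℂ) * g y) + (l : ℂ) ^ 2 * Jc y := by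
    intro y
    rw [htay y, add_mul, add_mul, hRmul y]
    congr 1
    congr 1
    simp only [Complex.real_smul]
    push_cast
    ring
  have I1 : Integrable (fun y : ℝ => F (l * |x|) * g y) := hg_int.const_mul _
  have I2 : Integrable (fun y : ℝ => (-(G' x)) * ((y : ℂ) * g y)) := hyg_int.const_mul _
  have I3 : Integrable (fun y : ℝ => (l : ℂ) ^ 2 * Jc y) := hJc_int.const_mul _
  refine ⟨part1, part2, ?_⟩
  calc ∫ y : ℝ, F (l * |x - y|) * g y
      = ∫ y : ℝ, (F (l * |x|) * g y + (-(G' x)) * ((y : ℂ) * g y) + (l : ℂ) ^ 2 * Jc y) := by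
        exact integral_congr_ae (Filter.Eventually.of_forall hsplit)
    _ = (∫ y : ℝ, F (l * |x|) * g y) + (∫ y : ℝ, (-(G' x)) * ((y : ℂ) * g y))
        + ∫ y : ℝ, (l : ℂ) ^ 2 * Jc y := by
        have e1 := integral_add (I1.add I2) I3
        simp only [Pi.add_apply] at e1
        rw [e1, integral_add I1 I2]
    _ = (l : ℂ) ^ 2 * ∫ y : ℝ, Jc y := by
        rw [integral_const_mul, integral_const_mul, integral_const_mul, hg0, hg1]
        simp
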